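/- arXiv:1706.00600 — 3 statements merged into one kernel-verified Lean document; each statement's English description precedes it below -/
import Mathlib

section
/- Let V be a complex Hilbert space, let a : V × V → ℂ be a bounded sesquilinear form with |a(u,v)| ≤ M ‖u‖ ‖v‖ for all u, v ∈ V, and let W ⊆ V be a nonzero closed subspace on which a is coercive after rotation: there exist θ ∈ ℝ and α > 0 with Re( e^{iθ} a(w,w) ) ≥ α ‖w‖² for all w ∈ W. Let u ∈ V and u_h ∈ W satisfy the Galerkin orthogonality a(u − u_h, w) = 0 for all w ∈ W. Then ‖u − u_h‖ ≤ (M/α) inf_{w ∈ W} ‖u − w‖. -/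
open scoped InnerProductSpace


/-- **Xu–Zikatanov quasi-optimality estimate** (abstract error estimate used in
Theorems 3.2 and 4.7 of Ern–Guermond). If the bounded sesquilinear form `a` is coercive
after rotation on a nonzero closed subspace `W` of a complex Hilbert space `V`, and
`u ∈ V`, `u_h ∈ W` satisfy the Galerkin orthogonality `a(u - u_h, w) = 0` for all `w ∈ W`,
then `‖u - u_h‖ ≤ (M/α) inf_{w ∈ W} ‖u - w‖`. -/
theorem xu_zikatanov_quasi_optimality
    {V : Type*} [NormedAddCommGroup V] [InnerProductSpace ℂ V] [CompleteSpace V]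
    (a : V → V → ℂ) (M : ℝ)
    (ha_add1 : ∀ u u' v : V, a (u + u') v = a u v + a u' v)
    (ha_smul1 : ∀ (c : ℂ) (u v : V), a (c • u) v = c * a u v)
    (ha_add2 : ∀ u v v' : V, a u (v + v') = a u v + a u v')
    (ha_smul2 : ∀ (c : ℂ) (u v : V), a u (c • v) = (starRingEnd ℂ) c * a u v)
    (hbound : ∀ u v : V, ‖a u v‖ ≤ M * ‖u‖ * ‖v‖)
    (W : Submodule ℂ V) (hWclosed : IsClosed (W : Set V)) (hWne : W ≠ ⊥)
    (θ α : ℝ) (hα : 0 < α)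
    (hcoer : ∀ w ∈ W, α * ‖w‖ ^ 2 ≤ (Complex.exp (θ * Complex.I) * a w w).re)
    (u uh : V) (huh : uh ∈ W)
    (hGal : ∀ w ∈ W, a (u - uh) w = 0) :
    ‖u - uh‖ ≤ (M / α) * ⨅ w : W, ‖u - (w : V)‖ := by
  classical
  -- First, `α ≤ M`, using a nonzero element of `W`.
  obtain ⟨w₀, hw₀W, hw₀⟩ := Submodule.exists_mem_ne_zero_of_ne_bot hWne
  have hw₀n : (0:ℝ) < ‖w₀‖ := norm_pos_iff.mpr hw₀
  have hreabs : ∀ x : V, (Complex.exp ((θ:ℂ) * Complex.I) * a x x).re ≤ M * ‖x‖ * ‖x‖ := by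
    intro x
    calc (Complex.exp ((θ:ℂ) * Complex.I) * a x x).re
        ≤ ‖Complex.exp ((θ:ℂ) * Complex.I) * a x x‖ := Complex.re_le_norm _
      _ = ‖a x x‖ := by
          rw [norm_mul, Complex.norm_exp_ofReal_mul_I, one_mul]
      _ ≤ M * ‖x‖ * ‖x‖ := hbound x x
  have hMα : α ≤ M := by
    have h1 := hcoer w₀ hw₀W
    have h2 := hreabs w₀
    rw [sq] at h1
    nlinarith [mul_pos hw₀n hw₀n]
  have hM : 0 < M := lt_of_lt_of_le hα hMα
  set z : V := u - uh with hz
  -- Key pointwise estimate: for every `w ∈ W`, `α ‖z‖ ≤ M ‖u - w‖`.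
  have key : ∀ w ∈ W, α * ‖z‖ ≤ M * ‖u - w‖ := by
    intro w hw
    by_cases hz0 : z = 0
    · rw [hz0, norm_zero, mul_zero]; positivity
    have hzn : (0:ℝ) < ‖z‖ := norm_pos_iff.mpr hz0
    set y : V := uh - w with hy
    have hyW : y ∈ W := W.sub_mem huh hw
    have huw : u - w = y + z := by rw [hy, hz]; abel
    -- Step 1: for every `t : ℂ`, `α ‖y‖ ≤ M ‖y + t • z‖`.
    have step1 : ∀ t : ℂ, α * ‖y‖ ≤ M * ‖y + t • z‖ := by
      intro t
      have hzy : a z y = 0 := hGal y hyW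
      have ha_eq : a (y + t • z) y = a y y := by
        rw [ha_add1, ha_smul1, hzy, mul_zero, add_zero]
      have h1 : α * ‖y‖ ^ 2 ≤ (Complex.exp ((θ:ℂ) * Complex.I) * a (y + t • z) y).re := by
        rw [ha_eq]; exact hcoer y hyW
      have h2 : (Complex.exp ((θ:ℂ) * Complex.I) * a (y + t • z) y).re
          ≤ M * ‖y + t • z‖ * ‖y‖ := by
        calc (Complex.exp ((θ:ℂ) * Complex.I) * a (y + t • z) y).re
            ≤ ‖Complex.exp ((θ:ℂ) * Complex.I) * a (y + t • z) y‖ :=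
              Complex.re_le_norm _
          _ = ‖a (y + t • z) y‖ := by
              rw [norm_mul, Complex.norm_exp_ofReal_mul_I, one_mul]
          _ ≤ M * ‖y + t • z‖ * ‖y‖ := hbound _ _
      rcases eq_or_ne y 0 with h0 | h0
      · rw [h0, norm_zero, mul_zero]; positivity
      · have hyn : (0:ℝ) < ‖y‖ := norm_pos_iff.mpr h0
        nlinarith
    -- Step 2: the angle condition `M ‖⟪y,z⟫‖ ≤ √(M² - α²) ‖y‖ ‖z‖`.
    set p : ℂ := @inner ℂ V _ y z with hp
    set t₀ : ℂ := -(starRingEnd ℂ p) / ((‖z‖:ℂ)^2) with ht₀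
    have hzC : ((‖z‖:ℂ))^2 ≠ 0 := by
      simpa using pow_ne_zero 2 (by exact_mod_cast hzn.ne' : (‖z‖:ℂ) ≠ 0)
    have hconj : (starRingEnd ℂ) p * p = ((‖p‖:ℂ))^2 := RCLike.conj_mul p
    have hexp : ‖y + t₀ • z‖ ^ 2 = ‖y‖^2 - ‖p‖^2 / ‖z‖^2 := by
      have h1 : ‖y + t₀ • z‖ ^ 2
          = ‖y‖^2 + 2 * (⟪y, t₀ • z⟫_ℂ).re + ‖t₀ • z‖^2 := by
        exact @norm_add_sq ℂ V _ _ _ y (t₀ • z)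
      rw [h1, inner_smul_right, norm_smul]
      have hpt : t₀ * p = -(((‖p‖^2 / ‖z‖^2 : ℝ)):ℂ) := by
        rw [ht₀, neg_div, neg_mul, div_mul_eq_mul_div, hconj]
        push_cast
        ring
      have hnt : ‖t₀‖ = ‖p‖ / ‖z‖^2 := by
        rw [ht₀, norm_div, norm_neg, RCLike.norm_conj]
        congr 1
        rw [norm_pow, Complex.norm_real]
        simp
      rw [← hp, hpt, hnt]
      have hrr : (-(((‖p‖^2 / ‖z‖^2 : ℝ)):ℂ)).re = -(‖p‖^2 / ‖z‖^2) := by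
        rw [Complex.neg_re, Complex.ofReal_re]
      rw [hrr, mul_pow, div_pow]
      field_simp
      ring
    have step2 : M^2 * ‖p‖^2 ≤ (M^2 - α^2) * (‖y‖^2 * ‖z‖^2) := by
      have h := step1 t₀
      have h2 : (α * ‖y‖)^2 ≤ (M * ‖y + t₀ • z‖)^2 := by
        have hαy : 0 ≤ α * ‖y‖ := by positivity
        exact pow_le_pow_left₀ hαy h 2
      rw [mul_pow, mul_pow, hexp] at h2
      have hz2 : (0:ℝ) < ‖z‖^2 := by positivity
      have h3 : ‖p‖^2 / ‖z‖^2 * ‖z‖^2 = ‖p‖^2 := div_mul_cancel₀ _ hz2.ne'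
      have h4 : M^2 * (‖p‖^2 / ‖z‖^2) * ‖z‖^2 = M^2 * ‖p‖^2 := by
        rw [mul_assoc, h3]
      nlinarith [mul_le_mul_of_nonneg_right h2 hz2.le, h4]
    -- Step 3: conclude `α ‖z‖ ≤ M ‖y + z‖`.
    set s : ℝ := Real.sqrt (M^2 - α^2) with hs
    have hs0 : 0 ≤ s := Real.sqrt_nonneg _
    have hs2 : s^2 = M^2 - α^2 := Real.sq_sqrt (by nlinarith)
    have hMp : M * ‖p‖ ≤ s * (‖y‖ * ‖z‖) := by
      have hl : (M * ‖p‖)^2 ≤ (s * (‖y‖ * ‖z‖))^2 := by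
        rw [mul_pow, mul_pow, mul_pow, hs2]; nlinarith
      exact (pow_le_pow_iff_left₀ (by positivity) (by positivity) two_ne_zero).mp hl
    have hre : -‖p‖ ≤ p.re := by
      have h1 : |p.re| ≤ ‖p‖ := by
        exact Complex.abs_re_le_norm p
      linarith [neg_abs_le p.re]
    have hnyz : ‖y + z‖^2 = ‖y‖^2 + 2 * p.re + ‖z‖^2 := by
      simpa using @norm_add_sq ℂ V _ _ _ y z
    have hfin : (α * ‖z‖)^2 ≤ (M * ‖y + z‖)^2 := by
      rw [mul_pow, mul_pow, hnyz]
      nlinarith [mul_le_mul_of_nonneg_left hMp (le_of_lt hM), sq_nonneg (M * ‖y‖ - s * ‖z‖)]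
    rw [huw]
    exact (pow_le_pow_iff_left₀ (by positivity) (by positivity) two_ne_zero).mp hfin
  -- Conclude by taking the infimum.
  have hC : (0:ℝ) < M / α := by positivity
  have hinf : ‖z‖ / (M / α) ≤ ⨅ w : W, ‖u - (w : V)‖ := by
    apply le_ciInf
    intro w
    have heq : ‖z‖ / (M / α) = ‖z‖ * α / M := by
      rw [div_div_eq_mul_div]
    rw [heq, div_le_iff₀ hM]
    nlinarith [key w w.2]
  show ‖z‖ ≤ (M / α) * ⨅ w : W, ‖u - (w : V)‖
  calc ‖z‖ = (M / α) * (‖z‖ / (M / α)) := by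
        rw [mul_div_cancel₀ _ hC.ne']
    _ ≤ (M / α) * ⨅ w : W, ‖u - (w : V)‖ :=
        mul_le_mul_of_nonneg_left hinf (le_of_lt hC)
end

section
/- Let V and L be complex Hilbert spaces and let ι : V → L be an injective bounded linear map with dense range (a continuous embedding). Let a : V × V → ℂ be a bounded sesquilinear form that is coercive: Re a(v,v) ≥ α ‖v‖²_V for all v ∈ V with α > 0. Let (V_n)_{n∈ℕ} be a sequence of finite-dimensional subspaces of V such that dist_V(v, V_n) → 0 as n → ∞ for every v ∈ V, and for each n let G_n : V → V_n be the Galerkin projection, i.e., the (well-defined) map such that a(G_n(v) − v, w) = 0 for all w ∈ V_n. Then lim_{n→∞} sup_{v ∈ V \ V_n} ‖ι(G_n(v) − v)‖_L / ‖G_n(v) − v‖_V = 0 if and only if ι is a compact operator. -/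
open Filter

section Aux

/-- A continuous linear map whose range lies in a finite-dimensional submodule is a
compact operator. -/
lemma AubinNitsche.finiteRank_isCompactOperator {V L : Type*} [NormedAddCommGroup V]
    [NormedSpace ℂ V] [NormedAddCommGroup L] [NormedSpace ℂ L]
    (f : V →L[ℂ] L) (W : Submodule ℂ L) [FiniteDimensional ℂ W]
    (h : ∀ v, f v ∈ W) : IsCompactOperator f := by
  have : ProperSpace W := FiniteDimensional.proper ℂ W
  set g : V →L[ℂ] W := f.codRestrict W h with hg
  refine ⟨Subtype.val '' Metric.closedBall (0 : W) (‖g‖ + 1),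
    (isCompact_closedBall _ _).image continuous_subtype_val, ?_⟩
  refine Filter.mem_of_superset (Metric.closedBall_mem_nhds (0 : V) one_pos) ?_
  intro x hx
  rw [Metric.mem_closedBall, dist_zero_right] at hx
  refine ⟨g x, ?_, rfl⟩
  rw [Metric.mem_closedBall, dist_zero_right]
  calc ‖g x‖ ≤ ‖g‖ * ‖x‖ := g.le_opNorm x
    _ ≤ ‖g‖ + 1 := by nlinarith [norm_nonneg g, norm_nonneg x]

/-- Lax–Milgram solvability in the second argument of a bounded coercive sesquilinear form. -/
lemma AubinNitsche.exists_adjoint {V : Type*} [NormedAddCommGroup V] [InnerProductSpace ℂ V]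
    [CompleteSpace V] (a : V → V → ℂ) (M : ℝ)
    (ha_add1 : ∀ u u' v : V, a (u + u') v = a u v + a u' v)
    (ha_smul1 : ∀ (c : ℂ) (u v : V), a (c • u) v = c * a u v)
    (ha_add2 : ∀ u v v' : V, a u (v + v') = a u v + a u v')
    (ha_smul2 : ∀ (c : ℂ) (u v : V), a u (c • v) = (starRingEnd ℂ) c * a u v)
    (hbound : ∀ u v : V, ‖a u v‖ ≤ M * ‖u‖ * ‖v‖)
    (α : ℝ) (hα : 0 < α) (hcoer : ∀ v : V, α * ‖v‖ ^ 2 ≤ (a v v).re)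
    (F : V →L[ℂ] ℂ) : ∃ z : V, ∀ y, a y z = F y := by
  have hb' : ∀ z y : V, ‖a y z‖ ≤ |M| * ‖z‖ * ‖y‖ := by
    intro z y
    calc ‖a y z‖ ≤ M * ‖y‖ * ‖z‖ := hbound y z
      _ ≤ |M| * ‖z‖ * ‖y‖ := by
          nlinarith [mul_nonneg (mul_nonneg (sub_nonneg.2 (le_abs_self M)) (norm_nonneg y))
            (norm_nonneg z)]
  let φ : V → (V →L[ℂ] ℂ) := fun z => LinearMap.mkContinuous
    { toFun := fun y => a y z
      map_add' := fun y y' => ha_add1 y y' z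
      map_smul' := fun c y => by simpa using ha_smul1 c y z }
    (|M| * ‖z‖) (fun y => hb' z y)
  let A : V → V := fun z => (InnerProductSpace.toDual ℂ V).symm (φ z)
  have hA : ∀ z y : V, inner ℂ (A z) y = a y z := fun z y =>
    InnerProductSpace.toDual_symm_apply
  have hAadd : ∀ z z', A (z + z') = A z + A z' := by
    intro z z'
    refine ext_inner_right ℂ fun y => ?_
    rw [inner_add_left, hA, hA, hA, ha_add2]
  have hAsmul : ∀ (c : ℂ) z, A (c • z) = c • A z := by
    intro c z
    refine ext_inner_right ℂ fun y => ?_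
    rw [inner_smul_left, hA, hA, ha_smul2]
  have hAnorm : ∀ z, ‖A z‖ ≤ |M| * ‖z‖ := by
    intro z
    have h1 : ‖A z‖ = ‖φ z‖ := (InnerProductSpace.toDual ℂ V).symm.norm_map (φ z)
    rw [h1]
    exact LinearMap.mkContinuous_norm_le _ (by positivity) _
  let Ac : V →L[ℂ] V := LinearMap.mkContinuous
    { toFun := A
      map_add' := hAadd
      map_smul' := fun c z => by simpa using hAsmul c z }
    |M| (fun z => hAnorm z)
  have hAc : ∀ z y : V, inner ℂ (Ac z) y = a y z := hA
  have hlow : ∀ z, α * ‖z‖ ≤ ‖Ac z‖ := by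
    intro z
    rcases eq_or_ne z 0 with rfl | hz
    · simp
    · have h1 : α * ‖z‖ ^ 2 ≤ (a z z).re := hcoer z
      have h2 : (a z z).re ≤ ‖Ac z‖ * ‖z‖ := by
        calc (a z z).re ≤ ‖a z z‖ := Complex.re_le_norm (a z z)
          _ = ‖(inner ℂ (Ac z) z : ℂ)‖ := by rw [hAc]
          _ ≤ ‖Ac z‖ * ‖z‖ := norm_inner_le_norm _ _
      have hz' : 0 < ‖z‖ := norm_pos_iff.2 hz
      nlinarith
  have hanti : AntilipschitzWith (⟨α⁻¹, by positivity⟩ : NNReal) Ac := by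
    refine Ac.antilipschitz_of_bound fun z => ?_
    have h1 := hlow z
    show ‖z‖ ≤ α⁻¹ * ‖Ac z‖
    rw [← div_eq_inv_mul, le_div_iff₀ hα]
    nlinarith
  have hclosed : IsClosed (Set.range Ac) := hanti.isClosed_range Ac.uniformContinuous
  let K : Submodule ℂ V := LinearMap.range (Ac : V →ₗ[ℂ] V)
  have hKc : IsClosed (K : Set V) := by
    have : (K : Set V) = Set.range Ac := by
      ext x; simp [K, LinearMap.mem_range]
    rw [this]; exact hclosed
  haveI : CompleteSpace K := hKc.completeSpace_coe
  have hKtop : K = ⊤ := by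
    rw [← Submodule.orthogonal_eq_bot_iff, Submodule.eq_bot_iff]
    intro r hr
    rw [Submodule.mem_orthogonal] at hr
    have h0 : (inner ℂ (Ac r) r : ℂ) = 0 := hr (Ac r) (LinearMap.mem_range.2 ⟨r, rfl⟩)
    have h1 : (a r r).re = 0 := by rw [← hAc r r, h0]; simp
    have h2 := hcoer r
    have h3 : ‖r‖ ^ 2 = 0 := le_antisymm (by nlinarith) (sq_nonneg _)
    exact norm_eq_zero.1 ((pow_eq_zero_iff (two_ne_zero)).1 h3)
  have hmem : (InnerProductSpace.toDual ℂ V).symm F ∈ K := hKtop ▸ Submodule.mem_top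
  obtain ⟨z, hz⟩ := LinearMap.mem_range.1 hmem
  refine ⟨z, fun y => ?_⟩
  have h1 : a y z = inner ℂ (Ac z) y := (hAc z y).symm
  rw [h1, show Ac z = _ from hz, InnerProductSpace.toDual_symm_apply]

end Aux

set_option maxHeartbeats 1000000 in
/-- **Aubin–Nitsche = compactness** (Sayas; Theorem 3.3 of Ern–Guermond).
Let `ι : V → L` be a continuous embedding (injective with dense range) of complex Hilbert
spaces, let `a` be a bounded coercive sesquilinear form on `V`, let `(V_n)` be a sequence
of finite-dimensional subspaces approximating every `v ∈ V`, and let `G_n` be the Galerkin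
projections: `G_n v ∈ V_n` and `a(G_n v - v, w) = 0` for all `w ∈ V_n`. Then
`sup_{v ∉ V_n} ‖ι(G_n v - v)‖_L / ‖G_n v - v‖_V → 0` iff `ι` is a compact operator. -/
theorem aubin_nitsche_iff_compact
    {V L : Type*} [NormedAddCommGroup V] [InnerProductSpace ℂ V] [CompleteSpace V]
    [NormedAddCommGroup L] [InnerProductSpace ℂ L] [CompleteSpace L]
    (ι : V →L[ℂ] L) (hinj : Function.Injective ι) (hdense : DenseRange ι)
    (a : V → V → ℂ) (M : ℝ)
    (ha_add1 : ∀ u u' v : V, a (u + u') v = a u v + a u' v)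
    (ha_smul1 : ∀ (c : ℂ) (u v : V), a (c • u) v = c * a u v)
    (ha_add2 : ∀ u v v' : V, a u (v + v') = a u v + a u v')
    (ha_smul2 : ∀ (c : ℂ) (u v : V), a u (c • v) = (starRingEnd ℂ) c * a u v)
    (hbound : ∀ u v : V, ‖a u v‖ ≤ M * ‖u‖ * ‖v‖)
    (α : ℝ) (hα : 0 < α)
    (hcoer : ∀ v : V, α * ‖v‖ ^ 2 ≤ (a v v).re)
    (Vn : ℕ → Submodule ℂ V) (hfin : ∀ n, FiniteDimensional ℂ (Vn n))
    (happrox : ∀ v : V, Tendsto (fun n => ⨅ w : Vn n, ‖v - (w : V)‖) atTop (nhds 0))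
    (G : ℕ → V → V)
    (hGmem : ∀ n (v : V), G n v ∈ Vn n)
    (hGal : ∀ n (v : V), ∀ w ∈ Vn n, a (G n v - v) w = 0) :
    Tendsto
        (fun n => ⨆ v : {v : V // v ∉ Vn n}, ‖ι (G n (v : V) - (v : V))‖ / ‖G n (v : V) - (v : V)‖)
        atTop (nhds 0) ↔
      IsCompactOperator (⇑ι) := by
  rcases subsingleton_or_nontrivial V with hV | hV
  · constructor
    · intro _
      refine ⟨{0}, isCompact_singleton, ?_⟩
      have h0 : (⇑ι) ⁻¹' {0} = Set.univ := by
        ext x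
        simp [Subsingleton.elim x 0]
      rw [h0]; exact Filter.univ_mem
    · intro _
      have he : ∀ n, IsEmpty {v : V // v ∉ Vn n} := by
        intro n
        refine ⟨fun v => v.2 ?_⟩
        rw [Subsingleton.elim (v : V) 0]; exact zero_mem _
      have h0 : (fun n => ⨆ v : {v : V // v ∉ Vn n},
          ‖ι (G n (v : V) - (v : V))‖ / ‖G n (v : V) - (v : V)‖) = fun _ => (0 : ℝ) := by
        funext n
        haveI := he n
        exact Real.iSup_of_isEmpty _
      rw [h0]; exact tendsto_const_nhds
  set S : ℕ → ℝ := fun n => ⨆ v : {v : V // v ∉ Vn n},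
    ‖ι (G n (v : V) - (v : V))‖ / ‖G n (v : V) - (v : V)‖ with hSdef
  obtain ⟨x0, hx0⟩ := exists_ne (0 : V)
  have hM : 0 < M := by
    have h1 := hcoer x0
    have h2 : (a x0 x0).re ≤ ‖a x0 x0‖ := Complex.re_le_norm _
    have h3 := hbound x0 x0
    have h4 : 0 < ‖x0‖ := norm_pos_iff.2 hx0
    have h5 : ‖x0‖ ^ 2 = ‖x0‖ * ‖x0‖ := sq ‖x0‖ ▸ rfl
    nlinarith [mul_pos hα (mul_pos h4 h4)]
  have hzero1 : ∀ w : V, a 0 w = 0 := fun w => by simpa using ha_smul1 0 0 w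
  have hneg2 : ∀ u v : V, a u (-v) = - a u v := fun u v => by
    simpa using ha_smul2 (-1) u v
  have hsub2 : ∀ u v v' : V, a u (v - v') = a u v - a u v' := fun u v v' => by
    rw [sub_eq_add_neg, ha_add2, hneg2, sub_eq_add_neg]
  have hneg1 : ∀ u v : V, a (-u) v = - a u v := fun u v => by
    simpa using ha_smul1 (-1) u v
  have hsub1 : ∀ u u' v : V, a (u - u') v = a u v - a u' v := fun u u' v => by
    rw [sub_eq_add_neg, ha_add1, hneg1, sub_eq_add_neg]
  have huniq : ∀ n (v x : V), x ∈ Vn n → (∀ w ∈ Vn n, a (x - v) w = 0) → G n v = x := by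
    intro n v x hx hax
    have hd : G n v - x ∈ Vn n := sub_mem (hGmem n v) hx
    have h0 : a (G n v - x) (G n v - x) = 0 := by
      have h1 : a (G n v - x) (G n v - x)
          = a (G n v - v) (G n v - x) - a (x - v) (G n v - x) := by
        rw [← hsub1]; congr 1; abel
      rw [h1, hGal n v _ hd, hax _ hd, sub_zero]
    have h2 := hcoer (G n v - x)
    rw [h0] at h2
    simp only [Complex.zero_re] at h2
    have h3 : ‖G n v - x‖ ^ 2 = 0 := le_antisymm (by nlinarith) (sq_nonneg _)
    have h4 := norm_eq_zero.1 ((pow_eq_zero_iff two_ne_zero).1 h3)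
    exact sub_eq_zero.1 h4
  have hGid : ∀ n, ∀ v ∈ Vn n, G n v = v := fun n v hv =>
    huniq n v v hv (fun w _ => by rw [sub_self, hzero1])
  have hCea : ∀ n (v : V), α * ‖G n v - v‖ ≤ M * ‖v‖ := by
    intro n v
    set e := G n v - v with he
    have h1 : a e e = - a e v := by
      have h0 : a e e = a e (G n v) - a e v := by rw [he, hsub2]
      rw [h0, hGal n v _ (hGmem n v)]; ring
    have h2 := hcoer e
    have h3 : (a e e).re ≤ ‖a e v‖ := by
      rw [h1]
      calc (- a e v).re ≤ ‖- a e v‖ := Complex.re_le_norm _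
        _ = ‖a e v‖ := norm_neg _
    have h4 := hbound e v
    rcases eq_or_lt_of_le (norm_nonneg e) with h5 | h5
    · rw [← h5, mul_zero]; positivity
    · nlinarith
  have hne : ∀ n (v : {v : V // v ∉ Vn n}), G n (v : V) - (v : V) ≠ 0 := by
    intro n v h
    exact v.2 (by rw [← sub_eq_zero.1 h]; exact hGmem n v)
  have hbdd : ∀ n, BddAbove (Set.range fun v : {v : V // v ∉ Vn n} =>
      ‖ι (G n (v : V) - (v : V))‖ / ‖G n (v : V) - (v : V)‖) := by
    intro n
    refine ⟨‖ι‖, ?_⟩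
    rintro r ⟨v, rfl⟩
    have h1 : 0 < ‖G n (v : V) - (v : V)‖ := norm_pos_iff.2 (hne n v)
    rw [div_le_iff₀ h1]
    exact ι.le_opNorm _
  have hsupnn : ∀ n, 0 ≤ S n := fun n => Real.iSup_nonneg fun v => by positivity
  constructor
  · intro hsup
    have hGadd : ∀ n (u v : V), G n (u + v) = G n u + G n v := by
      intro n u v
      refine huniq n (u + v) (G n u + G n v) (add_mem (hGmem n u) (hGmem n v)) ?_
      intro w hw
      have h0 : G n u + G n v - (u + v) = (G n u - u) + (G n v - v) := by abel
      rw [h0, ha_add1, hGal n u w hw, hGal n v w hw, add_zero]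
    have hGsmul : ∀ n (c : ℂ) (v : V), G n (c • v) = c • G n v := by
      intro n c v
      refine huniq n (c • v) (c • G n v) (Submodule.smul_mem _ c (hGmem n v)) ?_
      intro w hw
      rw [← smul_sub, ha_smul1, hGal n v w hw, mul_zero]
    have hGnorm : ∀ n (v : V), ‖G n v‖ ≤ (1 + M / α) * ‖v‖ := by
      intro n v
      have h1 : ‖G n v‖ ≤ ‖G n v - v‖ + ‖v‖ := by
        calc ‖G n v‖ = ‖(G n v - v) + v‖ := by congr 1; abel
          _ ≤ ‖G n v - v‖ + ‖v‖ := norm_add_le _ _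
      have h2 : ‖G n v - v‖ ≤ (M / α) * ‖v‖ := by
        rw [div_mul_eq_mul_div, le_div_iff₀ hα]
        nlinarith [hCea n v]
      have h3 : (1 + M / α) * ‖v‖ = ‖v‖ + (M / α) * ‖v‖ := by ring
      linarith
    let Gc : ℕ → V →L[ℂ] V := fun n => LinearMap.mkContinuous
      { toFun := G n
        map_add' := hGadd n
        map_smul' := fun c v => by simpa using hGsmul n c v }
      (1 + M / α) (fun v => hGnorm n v)
    let T : ℕ → V →L[ℂ] L := fun n => ι.comp (Gc n)
    have hTb : ∀ n (v : V), ‖ι v - T n v‖ ≤ (M / α * S n) * ‖v‖ := by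
      intro n v
      have h0 : ‖ι v - T n v‖ = ‖ι (G n v - v)‖ := by
        have h1 : T n v = ι (G n v) := rfl
        rw [h1, ← norm_neg, ← map_sub, ← map_neg]
        congr 2
        abel
      rw [h0]
      by_cases hv : v ∈ Vn n
      · rw [hGid n v hv, sub_self, map_zero, norm_zero]
        exact mul_nonneg (mul_nonneg (by positivity) (hsupnn n)) (norm_nonneg v)
      · have h1 : 0 < ‖G n v - v‖ := norm_pos_iff.2 (hne n ⟨v, hv⟩)
        have h2 : ‖ι (G n v - v)‖ / ‖G n v - v‖ ≤ S n := le_ciSup (hbdd n) ⟨v, hv⟩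
        rw [div_le_iff₀ h1] at h2
        have h4 : ‖G n v - v‖ ≤ M / α * ‖v‖ := by
          rw [div_mul_eq_mul_div, le_div_iff₀ hα]
          nlinarith [hCea n v]
        calc ‖ι (G n v - v)‖ ≤ S n * ‖G n v - v‖ := h2
          _ ≤ S n * (M / α * ‖v‖) := mul_le_mul_of_nonneg_left h4 (hsupnn n)
          _ = (M / α * S n) * ‖v‖ := by ring
    have hTtend : Tendsto T atTop (nhds ι) := by
      rw [tendsto_iff_norm_sub_tendsto_zero]
      refine squeeze_zero (g := fun n => M / α * S n) (fun n => norm_nonneg _) (fun n => ?_) ?_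
      · refine ContinuousLinearMap.opNorm_le_bound _
          (mul_nonneg (by positivity) (hsupnn n)) fun v => ?_
        rw [ContinuousLinearMap.sub_apply, ← norm_neg, neg_sub]
        exact hTb n v
      · have h5 := hsup.const_mul (M / α)
        rw [mul_zero] at h5
        exact h5
    refine isCompactOperator_of_tendsto hTtend (Filter.Eventually.of_forall fun n => ?_)
    haveI := hfin n
    haveI : FiniteDimensional ℂ ((Vn n).map (ι : V →ₗ[ℂ] L)) :=
      Module.Finite.map _ _
    exact AubinNitsche.finiteRank_isCompactOperator (T n) ((Vn n).map (ι : V →ₗ[ℂ] L))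
      (fun v => Submodule.mem_map_of_mem (hGmem n v))
  · intro hcpt
    have hK : IsCompact (closure (⇑ι '' Metric.closedBall 0 1)) :=
      IsCompactOperator.isCompact_closure_image_closedBall (f := (ι : V →ₗ[ℂ] L)) hcpt 1
    have htb : TotallyBounded (⇑ι '' Metric.closedBall 0 1) :=
      hK.totallyBounded.subset subset_closure
    have hadj : ∀ y : L, ∃ z : V, ∀ x : V, a x z = inner ℂ y (ι x) := by
      intro y
      obtain ⟨z, hz⟩ := AubinNitsche.exists_adjoint a M ha_add1 ha_smul1 ha_add2 ha_smul2
        hbound α hα hcoer ((innerSL ℂ y).comp ι)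
      exact ⟨z, fun x => by simpa using hz x⟩
    choose z hzspec using hadj
    rw [Metric.tendsto_atTop]
    intro ε hε
    set δ1 : ℝ := (ε / 2) ^ 2 / (2 * (‖ι‖ + 1)) with hδ1def
    have hδ1 : 0 < δ1 := div_pos (pow_pos (half_pos hε) 2) (by positivity)
    set δ2 : ℝ := (ε / 2) ^ 2 / (2 * (M + 1)) with hδ2def
    have hδ2 : 0 < δ2 := div_pos (pow_pos (half_pos hε) 2) (by nlinarith)
    obtain ⟨t, hts, htfin, htcov⟩ := totallyBounded_iff_subset.1 htb _ (Metric.dist_mem_uniformity hδ1)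
    have hev : ∀ᶠ n in atTop, ∀ y ∈ t, (⨅ w : Vn n, ‖z y - (w : V)‖) < δ2 := by
      rw [eventually_all_finite htfin]
      intro y _
      exact (happrox (z y)).eventually_lt_const hδ2
    obtain ⟨N, hN⟩ := eventually_atTop.1 hev
    refine ⟨N, fun n hn => ?_⟩
    have hstep : S n ≤ ε / 2 := by
      refine Real.iSup_le (fun v => ?_) (by positivity)
      set e := G n (v : V) - (v : V) with he
      have henorm : 0 < ‖e‖ := norm_pos_iff.2 (hne n v)
      set c : ℂ := ((‖e‖⁻¹ : ℝ) : ℂ) with hc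
      have hcnorm : ‖c‖ = ‖e‖⁻¹ := by
        rw [hc, Complex.norm_real, Real.norm_eq_abs,
          abs_of_nonneg (inv_nonneg.2 (norm_nonneg e))]
      set x := c • e with hx
      have hxnorm : ‖x‖ = 1 := by
        rw [hx, norm_smul, hcnorm, inv_mul_cancel₀ henorm.ne']
      have hιx : ‖ι x‖ = ‖ι e‖ / ‖e‖ := by
        rw [hx, map_smul, norm_smul, hcnorm, div_eq_inv_mul]
      have hxort : ∀ w ∈ Vn n, a x w = 0 := by
        intro w hw
        rw [hx, ha_smul1, hGal n (v : V) w hw, mul_zero]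
      have hxball : ι x ∈ ⇑ι '' Metric.closedBall 0 1 :=
        ⟨x, by rw [Metric.mem_closedBall, dist_zero_right, hxnorm], rfl⟩
      obtain ⟨y, hyt, hxy⟩ := Set.mem_iUnion₂.1 (htcov hxball)
      have hd : dist (ι x) y < δ1 := hxy
      haveI : Nonempty (Vn n) := ⟨0⟩
      obtain ⟨w, hw⟩ := exists_lt_of_ciInf_lt (hN n hn y hyt)
      have key : ‖ι x‖ ^ 2 ≤ (ε / 2) ^ 2 := by
        have e1 : (inner ℂ (ι x) (ι x) : ℂ).re = ‖ι x‖ ^ 2 := by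
          rw [inner_self_eq_norm_sq_to_K (𝕜 := ℂ) (ι x)]
          norm_cast
        have e2 : (inner ℂ (ι x) (ι x) : ℂ) = inner ℂ (ι x - y) (ι x) + inner ℂ y (ι x) := by
          rw [inner_sub_left]; ring
        have e3 : (inner ℂ y (ι x) : ℂ) = a x (z y - w) := by
          rw [← hzspec y x, hsub2, hxort (w : V) w.2, sub_zero]
        have e5 : ‖a x (z y - w)‖ ≤ M * δ2 := by
          calc ‖a x (z y - (w : V))‖ ≤ M * ‖x‖ * ‖z y - (w : V)‖ := hbound _ _
            _ = M * ‖z y - (w : V)‖ := by rw [hxnorm]; ring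
            _ ≤ M * δ2 := mul_le_mul_of_nonneg_left hw.le hM.le
        have e6 : ‖(inner ℂ (ι x - y) (ι x) : ℂ)‖ ≤ δ1 * ‖ι‖ := by
          have h1 : ‖ι x - y‖ ≤ δ1 := by rw [← dist_eq_norm]; exact hd.le
          have h2 : ‖ι x‖ ≤ ‖ι‖ := by
            calc ‖ι x‖ ≤ ‖ι‖ * ‖x‖ := ι.le_opNorm x
              _ = ‖ι‖ := by rw [hxnorm, mul_one]
          calc ‖(inner ℂ (ι x - y) (ι x) : ℂ)‖ ≤ ‖ι x - y‖ * ‖ι x‖ := norm_inner_le_norm _ _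
            _ ≤ δ1 * ‖ι‖ := mul_le_mul h1 h2 (norm_nonneg _) hδ1.le
        have e7 : ‖ι x‖ ^ 2 ≤ δ1 * ‖ι‖ + M * δ2 := by
          rw [← e1, e2, Complex.add_re]
          have r1 : (inner ℂ (ι x - y) (ι x) : ℂ).re ≤ δ1 * ‖ι‖ :=
            le_trans (Complex.re_le_norm _) e6
          have r2 : (inner ℂ y (ι x) : ℂ).re ≤ M * δ2 := by
            rw [e3]
            exact le_trans (Complex.re_le_norm _) e5
          linarith
        have c1 : δ1 * ‖ι‖ ≤ (ε / 2) ^ 2 / 2 := by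
          rw [hδ1def, div_mul_eq_mul_div, div_le_div_iff₀ (by positivity) (by norm_num)]
          nlinarith [pow_pos (half_pos hε) 2, norm_nonneg ι]
        have c2 : M * δ2 ≤ (ε / 2) ^ 2 / 2 := by
          rw [hδ2def, mul_div_assoc']
          rw [div_le_div_iff₀ (by nlinarith) (by norm_num)]
          nlinarith [pow_pos (half_pos hε) 2]
        linarith
      have hfin2 : ‖ι x‖ ≤ ε / 2 := by
        nlinarith [norm_nonneg (ι x), half_pos hε]
      rw [← hιx]
      exact hfin2
    rw [Real.dist_eq, sub_zero, abs_of_nonneg (hsupnn n)]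
    linarith
end

section
/- Let Ω ⊆ ℝ³ be a measurable set, ℓ_D > 0, θ ∈ ℝ, and let μ̃, κ : Ω → ℂ be essentially bounded measurable functions with Re( e^{iθ} μ̃(x) ) ≥ μ_♭ > 0 and Re( e^{iθ} κ(x) ) ≥ κ_♭ > 0 for a.e. x ∈ Ω. Let C_P > 0 and let b, r ∈ L²(Ω; ℂ³) satisfy the Poincaré–Steklov inequality C_P ℓ_D⁻¹ ‖b‖_{L²} ≤ ‖r‖_{L²}. Then Re( e^{iθ} ∫_Ω ( μ̃(x) |b(x)|² + κ(x) |r(x)|² ) dx ) ≥ (1/2) κ_♭ ℓ_D⁻² min(1, C_P²) ( ‖b‖²_{L²} + ℓ_D² ‖r‖²_{L²} ). -/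
open MeasureTheory

/-- **Improved coercivity under the Poincaré–Steklov inequality** (estimate (4.6) of
Ern–Guermond). If `Re (e^{iθ} μ̃) ≥ μ♭ > 0` and `Re (e^{iθ} κ) ≥ κ♭ > 0` a.e. on `Ω` and
`b, r ∈ L²(Ω; ℂ³)` satisfy `C_P ℓ_D⁻¹ ‖b‖ ≤ ‖r‖`, then
`Re (e^{iθ} ∫_Ω (μ̃ |b|² + κ |r|²)) ≥ ½ κ♭ ℓ_D⁻² min(1, C_P²) (‖b‖² + ℓ_D² ‖r‖²)`. -/
theorem improved_coercivity_poincare_steklov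
    (Ω : Set (EuclideanSpace ℝ (Fin 3))) (hΩ : MeasurableSet Ω)
    (ℓD θ μflat κflat CP : ℝ) (hℓD : 0 < ℓD) (hμflat : 0 < μflat) (hκflat : 0 < κflat)
    (hCP : 0 < CP)
    (μ κ : EuclideanSpace ℝ (Fin 3) → ℂ)
    (hμmeas : AEStronglyMeasurable μ (volume.restrict Ω))
    (hκmeas : AEStronglyMeasurable κ (volume.restrict Ω))
    (hμbdd : ∃ C : ℝ, ∀ᵐ x ∂(volume.restrict Ω), ‖μ x‖ ≤ C)
    (hκbdd : ∃ C : ℝ, ∀ᵐ x ∂(volume.restrict Ω), ‖κ x‖ ≤ C)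
    (hμ : ∀ᵐ x ∂(volume.restrict Ω), μflat ≤ (Complex.exp (θ * Complex.I) * μ x).re)
    (hκ : ∀ᵐ x ∂(volume.restrict Ω), κflat ≤ (Complex.exp (θ * Complex.I) * κ x).re)
    (b r : EuclideanSpace ℝ (Fin 3) → EuclideanSpace ℂ (Fin 3))
    (hb : MemLp b 2 (volume.restrict Ω)) (hr : MemLp r 2 (volume.restrict Ω))
    (hPS : CP * ℓD⁻¹ * Real.sqrt (∫ x in Ω, ‖b x‖ ^ 2) ≤ Real.sqrt (∫ x in Ω, ‖r x‖ ^ 2)) :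
    (1 / 2) * κflat * (ℓD ^ 2)⁻¹ * min 1 (CP ^ 2) *
        ((∫ x in Ω, ‖b x‖ ^ 2) + ℓD ^ 2 * ∫ x in Ω, ‖r x‖ ^ 2) ≤
      (Complex.exp (θ * Complex.I) *
        ∫ x in Ω, (μ x * (‖b x‖ : ℂ) ^ 2 + κ x * (‖r x‖ : ℂ) ^ 2)).re := by
  set ν := volume.restrict Ω
  -- integrability of ‖b‖², ‖r‖²
  have hbi : Integrable (fun x => ‖b x‖ ^ 2) ν := by
    have := hb.integrable_norm_rpow (by norm_num) (by norm_num)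
    simpa [ENNReal.toReal_ofNat, Real.rpow_natCast] using this
  have hri : Integrable (fun x => ‖r x‖ ^ 2) ν := by
    have := hr.integrable_norm_rpow (by norm_num) (by norm_num)
    simpa [ENNReal.toReal_ofNat, Real.rpow_natCast] using this
  have hbiC : Integrable (fun x => ((‖b x‖ : ℂ)) ^ 2) ν := by
    have : Integrable (fun x => ((‖b x‖ ^ 2 : ℝ) : ℂ)) ν := hbi.ofReal
    simpa using this
  have hriC : Integrable (fun x => ((‖r x‖ : ℂ)) ^ 2) ν := by
    have : Integrable (fun x => ((‖r x‖ ^ 2 : ℝ) : ℂ)) ν := hri.ofReal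
    simpa using this
  obtain ⟨Cμ, hCμ⟩ := hμbdd
  obtain ⟨Cκ, hCκ⟩ := hκbdd
  have hμint : Integrable (fun x => μ x * (‖b x‖ : ℂ) ^ 2) ν :=
    Integrable.bdd_mul hbiC hμmeas hCμ
  have hκint : Integrable (fun x => κ x * (‖r x‖ : ℂ) ^ 2) ν :=
    Integrable.bdd_mul hriC hκmeas hCκ
  have hint : Integrable (fun x => μ x * (‖b x‖ : ℂ) ^ 2 + κ x * (‖r x‖ : ℂ) ^ 2) ν :=
    hμint.add hκint
  set c := Complex.exp (θ * Complex.I)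
  -- rewrite RHS as a real integral
  have hre : (c * ∫ x in Ω, (μ x * (‖b x‖ : ℂ) ^ 2 + κ x * (‖r x‖ : ℂ) ^ 2)).re
      = ∫ x in Ω, ((c * μ x).re * ‖b x‖ ^ 2 + (c * κ x).re * ‖r x‖ ^ 2) := by
    rw [← integral_const_mul]
    have h0 := integral_re (𝕜 := ℂ) (hint.const_mul c)
    rw [RCLike.re_to_complex] at h0
    rw [← h0]
    congr 1
    funext x
    have : c * (μ x * (‖b x‖ : ℂ) ^ 2 + κ x * (‖r x‖ : ℂ) ^ 2)
        = (c * μ x) * ((‖b x‖ ^ 2 : ℝ) : ℂ) + (c * κ x) * ((‖r x‖ ^ 2 : ℝ) : ℂ) := by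
      push_cast; ring
    rw [this]
    simp [Complex.add_re, Complex.mul_re, ← Complex.ofReal_pow]
  rw [hre]
  set B := ∫ x in Ω, ‖b x‖ ^ 2 with hB
  set R := ∫ x in Ω, ‖r x‖ ^ 2 with hR
  have hB0 : 0 ≤ B := integral_nonneg fun x => sq_nonneg _
  have hR0 : 0 ≤ R := integral_nonneg fun x => sq_nonneg _
  -- lower bound the integral
  have hmono : μflat * B + κflat * R
      ≤ ∫ x in Ω, ((c * μ x).re * ‖b x‖ ^ 2 + (c * κ x).re * ‖r x‖ ^ 2) := by
    have h1 : μflat * B + κflat * R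
        = ∫ x in Ω, (μflat * ‖b x‖ ^ 2 + κflat * ‖r x‖ ^ 2) := by
      rw [integral_add (hbi.const_mul _) (hri.const_mul _), integral_const_mul,
        integral_const_mul]
    rw [h1]
    have hintc : Integrable (fun x => (c * μ x).re * ‖b x‖ ^ 2 + (c * κ x).re * ‖r x‖ ^ 2) ν := by
      have h2 : Integrable (fun x => (c * (μ x * (‖b x‖ : ℂ) ^ 2 + κ x * (‖r x‖ : ℂ) ^ 2)).re) ν :=
        (hint.const_mul c).re
      refine h2.congr ?_
      filter_upwards with x
      have : c * (μ x * (‖b x‖ : ℂ) ^ 2 + κ x * (‖r x‖ : ℂ) ^ 2)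
          = (c * μ x) * ((‖b x‖ ^ 2 : ℝ) : ℂ) + (c * κ x) * ((‖r x‖ ^ 2 : ℝ) : ℂ) := by
        push_cast; ring
      rw [this]
      simp [Complex.add_re, Complex.mul_re, ← Complex.ofReal_pow]
    refine integral_mono_ae ((hbi.const_mul _).add (hri.const_mul _)) hintc ?_
    filter_upwards [hμ, hκ] with x h1 h2
    have := sq_nonneg ‖b x‖
    have := sq_nonneg ‖r x‖
    nlinarith
  refine le_trans ?_ hmono
  -- Poincaré–Steklov: CP² ℓD⁻² B ≤ R
  have hPS2 : CP ^ 2 * B ≤ ℓD ^ 2 * R := by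
    have h := mul_self_le_mul_self (by positivity) hPS
    rw [Real.mul_self_sqrt hR0] at h
    have hsB : Real.sqrt B * Real.sqrt B = B := Real.mul_self_sqrt hB0
    have hb2 : (CP * ℓD⁻¹ * Real.sqrt B) * (CP * ℓD⁻¹ * Real.sqrt B)
        = CP ^ 2 * ℓD⁻¹ ^ 2 * B := by
      linear_combination (CP ^ 2 * ℓD⁻¹ ^ 2) * hsB
    rw [hb2] at h
    have hℓ2 : (0:ℝ) < ℓD ^ 2 := by positivity
    calc CP ^ 2 * B = ℓD ^ 2 * (CP ^ 2 * ℓD⁻¹ ^ 2 * B) := by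
          field_simp
      _ ≤ ℓD ^ 2 * R := by nlinarith
  have hmin1 : min 1 (CP ^ 2) ≤ 1 := min_le_left _ _
  have hmin2 : min 1 (CP ^ 2) ≤ CP ^ 2 := min_le_right _ _
  have hmin0 : 0 ≤ min 1 (CP ^ 2) := le_min zero_le_one (by positivity)
  have hℓ2 : (0:ℝ) < ℓD ^ 2 := by positivity
  have key : (1 / 2) * κflat * (ℓD ^ 2)⁻¹ * min 1 (CP ^ 2) * (B + ℓD ^ 2 * R)
      ≤ κflat * R := by
    have h1 : min 1 (CP ^ 2) * B ≤ ℓD ^ 2 * R := le_trans (by nlinarith) hPS2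
    have h2 : min 1 (CP ^ 2) * (ℓD ^ 2 * R) ≤ ℓD ^ 2 * R := by nlinarith [mul_nonneg hℓ2.le hR0]
    have h3 : (1 / 2) * κflat * (ℓD ^ 2)⁻¹ * min 1 (CP ^ 2) * (B + ℓD ^ 2 * R)
        = (1 / 2) * κflat * (ℓD ^ 2)⁻¹ *
          (min 1 (CP ^ 2) * B + min 1 (CP ^ 2) * (ℓD ^ 2 * R)) := by ring
    rw [h3]
    calc (1 / 2) * κflat * (ℓD ^ 2)⁻¹ *
          (min 1 (CP ^ 2) * B + min 1 (CP ^ 2) * (ℓD ^ 2 * R))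
        ≤ (1 / 2) * κflat * (ℓD ^ 2)⁻¹ * (2 * (ℓD ^ 2 * R)) :=
          mul_le_mul_of_nonneg_left (by linarith) (by positivity)
      _ = κflat * R := by field_simp
  linarith [mul_nonneg hμflat.le hB0]
end
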